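/- For every β > 0, the integral ∫_{1/β}^∞ e^{−βτ}·𝔰^β(τ)·τ^{−1} dτ diverges to infinity; equivalently, ∫₀^∞ ( ∫₁^∞ e^{−t}·t^{u−2} dt ) / Γ(u) du = ∞. -/

import Mathlib

open MeasureTheory Set
open scoped ENNReal

/-- `𝔰^β(τ) = 4π ∫₀^∞ β^u τ^{u-1} / Γ(u) du`. -/
noncomputable def sBeta (β τ : ℝ) : ℝ :=
  4 * Real.pi * ∫ u in Set.Ioi (0 : ℝ), β ^ u * τ ^ (u - 1) / Real.Gamma u

section Aux
open Real

private theorem gamma_ge (s : ℝ) (hs : 1 ≤ s) : Real.exp (-1) ≤ Real.Gamma s := by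
  have h0 : (0:ℝ) < s := lt_of_lt_of_le one_pos hs
  rw [Real.Gamma_eq_integral h0]
  have hint := Real.GammaIntegral_convergent h0
  have h1 : ∫ x in Ioi (1:ℝ), Real.exp (-x) = Real.exp (-1) := integral_exp_neg_Ioi 1
  rw [← h1]
  have hsub : Ioi (1:ℝ) ⊆ Ioi 0 := fun x hx => mem_Ioi.mpr (lt_trans one_pos (mem_Ioi.mp hx))
  have hexp : IntegrableOn (fun x : ℝ => Real.exp (-x)) (Ioi 1) volume := by
    have := exp_neg_integrableOn_Ioi (1:ℝ) (one_pos)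
    refine this.congr_fun (fun x _ => by beta_reduce; rw [neg_one_mul]) measurableSet_Ioi
  calc ∫ x in Ioi (1:ℝ), Real.exp (-x)
      ≤ ∫ x in Ioi (1:ℝ), Real.exp (-x) * x ^ (s-1) := by
        refine setIntegral_mono_on hexp (hint.mono_set hsub) measurableSet_Ioi ?_
        intro x hx
        nth_rewrite 1 [← mul_one (Real.exp (-x))]
        have hx1 : (1:ℝ) ≤ x := le_of_lt hx
        have : (1:ℝ) ≤ x ^ (s-1) := Real.one_le_rpow hx1 (by linarith)
        nlinarith [Real.exp_pos (-x)]
    _ ≤ ∫ x in Ioi (0:ℝ), Real.exp (-x) * x ^ (s-1) := by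
        refine setIntegral_mono_set hint ?_ (HasSubset.Subset.eventuallyLE hsub)
        filter_upwards [self_mem_ae_restrict (measurableSet_Ioi : MeasurableSet (Ioi (0:ℝ)))] with x hx
        exact mul_nonneg (Real.exp_pos _).le (Real.rpow_nonneg (le_of_lt hx) _)

private theorem gamma_ge_exp (c u : ℝ) (hc : 1 ≤ c) (hu : 1 ≤ u) :
    Real.exp (-(c+1)) * c ^ (u-1) ≤ Real.Gamma u := by
  have h0 : (0:ℝ) < u := lt_of_lt_of_le one_pos hu
  have hc0 : (0:ℝ) < c := lt_of_lt_of_le one_pos hc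
  rw [Real.Gamma_eq_integral h0]
  have hint := Real.GammaIntegral_convergent h0
  have hsub : Ioc c (c+1) ⊆ Ioi (0:ℝ) := fun x hx => lt_of_lt_of_le hc0 (le_of_lt hx.1)
  have hvol : (volume (Ioc c (c+1))).toReal = 1 := by
    rw [Real.volume_Ioc]; simp
  calc Real.exp (-(c+1)) * c ^ (u-1)
      = ∫ _ in Ioc c (c+1), Real.exp (-(c+1)) * c ^ (u-1) := by
        rw [setIntegral_const, measureReal_def, hvol, one_smul]
    _ ≤ ∫ x in Ioc c (c+1), Real.exp (-x) * x ^ (u-1) := by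
        refine setIntegral_mono_on ((integrableOn_const_iff).mpr (Or.inr ?_)) (hint.mono_set hsub) measurableSet_Ioc ?_
        · rw [Real.volume_Ioc]; simp
        · intro x hx
          have h1 : Real.exp (-(c+1)) ≤ Real.exp (-x) := Real.exp_le_exp.mpr (by linarith [hx.2])
          have h2 : c ^ (u-1) ≤ x ^ (u-1) := Real.rpow_le_rpow hc0.le (le_of_lt hx.1) (by linarith)
          have := mul_le_mul h1 h2 (Real.rpow_nonneg hc0.le _) (Real.exp_pos _).le
          linarith
    _ ≤ ∫ x in Ioi (0:ℝ), Real.exp (-x) * x ^ (u-1) := by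
        refine setIntegral_mono_set hint ?_ (HasSubset.Subset.eventuallyLE hsub)
        filter_upwards [self_mem_ae_restrict (measurableSet_Ioi : MeasurableSet (Ioi (0:ℝ)))] with x hx
        exact mul_nonneg (Real.exp_pos _).le (Real.rpow_nonneg (le_of_lt hx) _)

private theorem gamma_ne_neg (u : ℝ) (h0 : 0 < u) : ∀ m : ℕ, u ≠ -m := by
  intro m h
  have : (0:ℝ) ≤ m := Nat.cast_nonneg m
  rw [h] at h0; linarith

private theorem contOn (s : Set ℝ) (hs : s ⊆ Ioi 0) : ContinuousOn (fun u => Real.Gamma u) s :=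
  fun u hu => (Real.differentiableAt_Gamma (gamma_ne_neg u (hs hu))).continuousAt.continuousWithinAt

private theorem fCont (x : ℝ) (hx : 0 < x) (s : Set ℝ) (hs : s ⊆ Ioi 0) :
    ContinuousOn (fun u => x ^ u / Real.Gamma u) s := by
  apply ContinuousOn.div
  · exact fun u _ => (Real.continuousAt_const_rpow hx.ne').continuousWithinAt
  · exact contOn s hs
  · intro u hu; exact (Real.Gamma_pos_of_pos (hs hu)).ne'

private theorem integ (x : ℝ) (hx : 1 < x) :
    IntegrableOn (fun u => x ^ u / Real.Gamma u) (Ioi 0) volume := by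
  have hx0 : (0:ℝ) < x := lt_trans one_pos hx
  have key : ∀ u : ℝ, 0 < u → 0 ≤ x ^ u / Real.Gamma u := fun u hu =>
    div_nonneg (Real.rpow_nonneg hx0.le _) (Real.Gamma_pos_of_pos hu).le
  rw [← Ioc_union_Ioi_eq_Ioi (le_of_lt one_pos)]
  apply IntegrableOn.union
  · -- Ioc 0 1 : bounded by e * x
    refine Integrable.mono' (g := fun _ => Real.exp 1 * x)
      ((integrableOn_const_iff).mpr (Or.inr (by rw [Real.volume_Ioc]; simp)))
      ((fCont x hx0 _ Ioc_subset_Ioi_self).aestronglyMeasurable measurableSet_Ioc) ?_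
    filter_upwards [self_mem_ae_restrict (measurableSet_Ioc : MeasurableSet (Ioc (0:ℝ) 1))] with u hu
    have h1 : Real.Gamma (u+1) = u * Real.Gamma u := Real.Gamma_add_one hu.1.ne'
    have h2 : Real.exp (-1) ≤ Real.Gamma (u+1) := gamma_ge _ (by linarith [hu.1])
    have hG : 0 < Real.Gamma u := Real.Gamma_pos_of_pos hu.1
    have hxu : x ^ u ≤ x := by
      nth_rewrite 2 [← Real.rpow_one x]
      exact Real.rpow_le_rpow_left_iff hx |>.mpr hu.2
    rw [Real.norm_eq_abs, abs_of_nonneg (key u hu.1), div_le_iff₀ hG]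
    have hGu : Real.exp (-1) ≤ u * Real.Gamma u := by rw [← h1]; exact h2
    have : Real.exp 1 * (u * Real.Gamma u) ≥ Real.exp 1 * Real.exp (-1) := by
      apply mul_le_mul_of_nonneg_left hGu (Real.exp_pos 1).le
    rw [← Real.exp_add] at this; simp at this
    -- this : 1 ≤ exp 1 * (u * Γ u)
    have hu1 : u * Real.Gamma u ≤ Real.Gamma u := by nlinarith [hu.2, hG]
    nlinarith [mul_le_mul_of_nonneg_left this hx0.le,
      mul_le_mul_of_nonneg_left hu1 (mul_pos (Real.exp_pos 1) hx0).le]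
  · -- Ioi 1 : bounded by (exp (x^2+1) * x^2) * exp (-(log x) * u)
    have hlx : 0 < Real.log x := Real.log_pos hx
    refine Integrable.mono' (g := fun u => (Real.exp (x^2+1) * x^2) * Real.exp (-(Real.log x) * u))
      (((exp_neg_integrableOn_Ioi (1:ℝ) hlx).const_mul _))
      ((fCont x hx0 _ (fun u hu => mem_Ioi.mpr (lt_trans one_pos (mem_Ioi.mp hu)))).aestronglyMeasurable measurableSet_Ioi) ?_
    filter_upwards [self_mem_ae_restrict (measurableSet_Ioi : MeasurableSet (Ioi (1:ℝ)))] with u hu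
    have hu1 : (1:ℝ) ≤ u := le_of_lt hu
    have hu0 : (0:ℝ) < u := lt_of_lt_of_le one_pos hu1
    have hc : (1:ℝ) ≤ x^2 := by nlinarith
    have hgam : Real.exp (-(x^2+1)) * (x^2) ^ (u-1) ≤ Real.Gamma u := gamma_ge_exp _ _ hc hu1
    have hG : 0 < Real.Gamma u := Real.Gamma_pos_of_pos hu0
    rw [Real.norm_eq_abs, abs_of_nonneg (key u hu0), div_le_iff₀ hG]
    have hlb : 0 < Real.exp (-(x^2+1)) * (x^2) ^ (u-1) := by positivity
    -- suffices: x^u ≤ RHS * lower bound of Γ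
    calc x ^ u ≤ (Real.exp (x^2+1) * x^2 * Real.exp (-(Real.log x) * u)) * (Real.exp (-(x^2+1)) * (x^2) ^ (u-1)) := by
          have e1 : (x^2 : ℝ) ^ (u-1) = x ^ (2*(u-1)) := by
            rw [← Real.rpow_natCast x 2, ← Real.rpow_mul hx0.le]
            norm_num
          have e2 : Real.exp (-(Real.log x) * u) = x ^ (-u) := by
            rw [Real.rpow_def_of_pos hx0]; ring_nf
          rw [e1, e2]
          have : Real.exp (x^2+1) * x^2 * x ^ (-u) * (Real.exp (-(x^2+1)) * x ^ (2*(u-1)))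
              = (Real.exp (x^2+1) * Real.exp (-(x^2+1))) * (x^2 * x ^ (-u) * x ^ (2*(u-1))) := by ring
          rw [this, ← Real.exp_add]
          simp only [add_neg_cancel, Real.exp_zero, one_mul]
          rw [← Real.rpow_natCast x 2, ← Real.rpow_add hx0, ← Real.rpow_add hx0]
          apply le_of_eq; congr 1; push_cast; ring
      _ ≤ (Real.exp (x^2+1) * x^2 * Real.exp (-(Real.log x) * u)) * Real.Gamma u := by
          apply mul_le_mul_of_nonneg_left hgam (by positivity)

private theorem gamma_ge_two (u : ℝ) (hu : 4 ≤ u) : 2 ≤ Real.Gamma u := by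
  have h3 : (1:ℝ) ≤ u - 3 := by linarith
  have e1 : Real.Gamma (u-2) = (u-3) * Real.Gamma (u-3) := by
    have := Real.Gamma_add_one (s := u-3) (by linarith)
    rw [show u-3+1 = u-2 by ring] at this; exact this
  have e2 : Real.Gamma (u-1) = (u-2) * Real.Gamma (u-2) := by
    have := Real.Gamma_add_one (s := u-2) (ne_of_gt (by linarith : (0:ℝ) < u-2))
    rw [show u-2+1 = u-1 by ring] at this; exact this
  have e3 : Real.Gamma u = (u-1) * Real.Gamma (u-1) := by
    have := Real.Gamma_add_one (s := u-1) (ne_of_gt (by linarith : (0:ℝ) < u-1))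
    rw [show u-1+1 = u by ring] at this; exact this
  have hg := gamma_ge (u-3) h3
  have hexp : (1:ℝ)/3 ≤ Real.exp (-1) := by
    rw [Real.exp_neg, one_div]
    exact inv_anti₀ (Real.exp_pos 1) (by nlinarith [Real.exp_one_lt_d9])
  have p1 : (1:ℝ)/3 ≤ Real.Gamma (u-3) := le_trans hexp hg
  have p2 : (1:ℝ)/3 ≤ (u-3) * Real.Gamma (u-3) := by nlinarith
  have p3 : (2:ℝ)/3 ≤ (u-2) * ((u-3) * Real.Gamma (u-3)) := by nlinarith
  rw [e3, e2, e1]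
  nlinarith

private theorem K_ge (u : ℝ) (hu : 4 < u) :
    Real.Gamma (u-1) - 1/(u-1) ≤ ∫ t in Ioi (1:ℝ), Real.exp (-t) * t ^ (u-2) := by
  have h1 : (0:ℝ) < u - 1 := by linarith
  have hGint := Real.GammaIntegral_convergent h1
  rw [show u-1-1 = u-2 by ring] at hGint
  have hsplit : (Ioc (0:ℝ) 1) ∪ (Ioi 1) = Ioi 0 := Ioc_union_Ioi_eq_Ioi (le_of_lt one_pos)
  have hIoc : IntegrableOn (fun t : ℝ => Real.exp (-t) * t ^ (u-2)) (Ioc 0 1) volume :=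
    hGint.mono_set Ioc_subset_Ioi_self
  have hIoi : IntegrableOn (fun t : ℝ => Real.exp (-t) * t ^ (u-2)) (Ioi 1) volume :=
    hGint.mono_set (fun x hx => mem_Ioi.mpr (lt_trans one_pos (mem_Ioi.mp hx)))
  have hunion : Real.Gamma (u-1) =
      (∫ t in Ioc (0:ℝ) 1, Real.exp (-t) * t ^ (u-2)) + ∫ t in Ioi (1:ℝ), Real.exp (-t) * t ^ (u-2) := by
    rw [Real.Gamma_eq_integral h1, show u-1-1 = u-2 by ring, ← hsplit,
      setIntegral_union (Ioc_disjoint_Ioi le_rfl) measurableSet_Ioi hIoc hIoi]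
  have hrint : IntegrableOn (fun t : ℝ => t ^ (u-2)) (Ioc 0 1) volume := by
    have := intervalIntegral.intervalIntegrable_rpow' (a := 0) (b := 1) (r := u-2) (by linarith)
    exact (intervalIntegrable_iff_integrableOn_Ioc_of_le (by norm_num)).mp this
  have hb : (∫ t in Ioc (0:ℝ) 1, Real.exp (-t) * t ^ (u-2)) ≤ 1/(u-1) := by
    calc (∫ t in Ioc (0:ℝ) 1, Real.exp (-t) * t ^ (u-2))
        ≤ ∫ t in Ioc (0:ℝ) 1, t ^ (u-2) := by
          refine setIntegral_mono_on hIoc hrint measurableSet_Ioc ?_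
          intro t ht
          nth_rewrite 2 [← one_mul (t ^ (u-2))]
          apply mul_le_mul_of_nonneg_right _ (Real.rpow_nonneg ht.1.le _)
          rw [← Real.exp_zero]
          exact Real.exp_le_exp.mpr (by linarith [ht.1])
      _ = 1/(u-1) := by
          rw [← intervalIntegral.integral_of_le (by norm_num : (0:ℝ) ≤ 1)]
          rw [integral_rpow (Or.inl (by linarith))]
          rw [Real.one_rpow, Real.zero_rpow (by linarith : u-2+1 ≠ 0)]
          rw [show u-2+1 = u-1 by ring]; ring
  linarith [hunion, hb]

private theorem tau_lower (β : ℝ) (hβ : 0 < β) (u : ℝ) (hu : 4 < u) :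
    ENNReal.ofReal (β * u⁻¹) ≤ ∫⁻ τ in Ioi (1/β),
      ENNReal.ofReal (Real.exp (-β*τ) * (4 * Real.pi * (β^u * τ^(u-1) / Real.Gamma u)) / τ) := by
  have hβ' : (0:ℝ) < 1/β := by positivity
  have hΓ : (2:ℝ) ≤ Real.Gamma u := gamma_ge_two u hu.le
  have hΓ0 : (0:ℝ) < Real.Gamma u := by linarith
  set c : ℝ := 4 * Real.pi * β^u / Real.Gamma u with hc
  have hc0 : 0 ≤ c := by positivity
  have hpt : ∀ τ ∈ Ioi (1/β),
      Real.exp (-β*τ) * (4 * Real.pi * (β^u * τ^(u-1) / Real.Gamma u)) / τ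
        = c * (Real.exp (-β*τ) * τ^(u-2)) := by
    intro τ hτ
    have hτ0 : (0:ℝ) < τ := lt_trans hβ' hτ
    have h1 : τ^(u-1) = τ^(u-2) * τ := by
      rw [← Real.rpow_add_one hτ0.ne' (u-2)]; congr 1; ring
    rw [h1, hc]; field_simp
  have hint : IntegrableOn (fun τ : ℝ => Real.exp (-β*τ) * τ^(u-2)) (Ioi (1/β)) volume := by
    have h := integrableOn_rpow_mul_exp_neg_mul_rpow (p := 1) (s := u-2) (b := β)
      (by linarith) one_pos hβ
    have h2 : IntegrableOn (fun τ : ℝ => Real.exp (-β*τ) * τ^(u-2)) (Ioi 0) volume := by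
      refine (h.congr_fun (fun τ hτ => ?_) measurableSet_Ioi)
      beta_reduce; rw [Real.rpow_one]; ring_nf
    exact h2.mono_set (fun τ hτ => lt_trans hβ' hτ)
  have hfull : IntegrableOn
      (fun τ : ℝ => Real.exp (-β*τ) * (4 * Real.pi * (β^u * τ^(u-1) / Real.Gamma u)) / τ)
      (Ioi (1/β)) volume := by
    have h3 : IntegrableOn (fun τ : ℝ => c * (Real.exp (-β*τ) * τ^(u-2))) (Ioi (1/β)) volume :=
      hint.const_mul c
    exact h3.congr_fun (fun τ hτ => (hpt τ hτ).symm) measurableSet_Ioi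
  have hnn : 0 ≤ᵐ[volume.restrict (Ioi (1/β))]
      (fun τ : ℝ => Real.exp (-β*τ) * (4 * Real.pi * (β^u * τ^(u-1) / Real.Gamma u)) / τ) := by
    filter_upwards [self_mem_ae_restrict (measurableSet_Ioi : MeasurableSet (Ioi (1/β)))] with τ hτ
    have hτ0 : (0:ℝ) < τ := lt_trans hβ' hτ
    rw [hpt τ hτ]
    positivity
  rw [← ofReal_integral_eq_lintegral_ofReal hfull hnn]
  apply ENNReal.ofReal_le_ofReal
  rw [setIntegral_congr_fun measurableSet_Ioi hpt, integral_const_mul]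
  set K : ℝ := ∫ t in Ioi (1:ℝ), Real.exp (-t) * t ^ (u-2) with hK
  have hsubst : (∫ τ in Ioi (1/β), Real.exp (-β*τ) * τ^(u-2)) = β^(1-u) * K := by
    have h := integral_comp_mul_left_Ioi (fun t => Real.exp (-t) * t ^ (u-2)) (1/β) hβ
    rw [mul_one_div_cancel hβ.ne'] at h
    have congr1 : (∫ τ in Ioi (1/β), Real.exp (-(β*τ)) * (β*τ)^(u-2))
        = ∫ τ in Ioi (1/β), β^(u-2) * (Real.exp (-β*τ) * τ^(u-2)) := by
      refine setIntegral_congr_fun measurableSet_Ioi (fun τ hτ => ?_)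
      have hτ0 : (0:ℝ) < τ := lt_trans hβ' hτ
      rw [Real.mul_rpow hβ.le hτ0.le, neg_mul]; ring
    simp only [smul_eq_mul] at h
    rw [congr1, integral_const_mul] at h
    have hβu : (0:ℝ) < β^(u-2) := Real.rpow_pos_of_pos hβ _
    have hβ1u : β^(1-u) * β^(u-2) = β⁻¹ := by
      rw [← Real.rpow_add hβ]
      rw [show 1-u+(u-2) = -1 by ring, Real.rpow_neg_one]
    calc (∫ τ in Ioi (1/β), Real.exp (-β*τ) * τ^(u-2))
        = (β^(u-2))⁻¹ * (β^(u-2) * ∫ τ in Ioi (1/β), Real.exp (-β*τ) * τ^(u-2)) := by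
          field_simp
      _ = (β^(u-2))⁻¹ * (β⁻¹ * K) := by rw [h]
      _ = β^(1-u) * K := by
          rw [← mul_assoc]; congr 1
          rw [show (1:ℝ)-u = (-(u-2)) + (-1) by ring, Real.rpow_add hβ,
            Real.rpow_neg hβ.le, Real.rpow_neg_one]
  rw [hsubst]
  have hKge : Real.Gamma (u-1) - 1/(u-1) ≤ K := K_ge u hu
  have hu1 : (0:ℝ) < u - 1 := by linarith
  have hGam1 : Real.Gamma u = (u-1) * Real.Gamma (u-1) := by
    have := Real.Gamma_add_one (s := u-1) (ne_of_gt hu1)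
    rw [show u-1+1 = u by ring] at this; exact this
  have hKge' : (Real.Gamma u - 1) / (u-1) ≤ K := by
    refine le_trans (le_of_eq ?_) hKge
    rw [hGam1]; field_simp
  have hcb : c * β^(1-u) = 4 * Real.pi * β / Real.Gamma u := by
    rw [hc, div_mul_eq_mul_div, mul_assoc, ← Real.rpow_add hβ]
    norm_num
  have hπ : (3:ℝ) ≤ Real.pi := Real.pi_gt_three.le
  have key : β * u⁻¹ ≤ (4 * Real.pi * β / Real.Gamma u) * ((Real.Gamma u - 1)/(u-1)) := by
    rw [← div_eq_mul_inv, div_mul_div_comm, div_le_div_iff₀ (by linarith) (by positivity)]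
    have h6 : Real.Gamma u * (u-1) ≤ 6 * ((Real.Gamma u - 1) * u) := by nlinarith
    nlinarith [mul_le_mul_of_nonneg_right h6 hβ.le,
      mul_nonneg (mul_nonneg (by linarith : (0:ℝ) ≤ Real.Gamma u - 1) (by linarith : (0:ℝ) ≤ u)) hβ.le]
  calc β * u⁻¹ ≤ (4 * Real.pi * β / Real.Gamma u) * ((Real.Gamma u - 1)/(u-1)) := key
    _ ≤ (4 * Real.pi * β / Real.Gamma u) * K := by
        apply mul_le_mul_of_nonneg_left hKge' (by positivity)
    _ = c * (β^(1-u) * K) := by rw [← mul_assoc, ← hcb]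

private theorem integ' (β τ : ℝ) (hβ : 0 < β) (hτ : 1 < β * τ) (hτ0 : 0 < τ) :
    IntegrableOn (fun u => β ^ u * τ ^ (u-1) / Real.Gamma u) (Ioi 0) volume := by
  have h : IntegrableOn (fun u => τ⁻¹ * ((β*τ) ^ u / Real.Gamma u)) (Ioi 0) volume :=
    (integ (β*τ) hτ).const_mul τ⁻¹
  refine h.congr_fun (fun u hu => ?_) measurableSet_Ioi
  beta_reduce
  rw [Real.mul_rpow hβ.le hτ0.le, Real.rpow_sub hτ0, Real.rpow_one]
  field_simp

private theorem L4 (β τ : ℝ) (hβ : 0 < β) (hτ : τ ∈ Ioi (1/β)) :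
    ENNReal.ofReal (Real.exp (-β * τ) * sBeta β τ / τ)
      = ∫⁻ u in Ioi (0:ℝ),
          ENNReal.ofReal (Real.exp (-β*τ) * (4 * Real.pi * (β^u * τ^(u-1) / Real.Gamma u)) / τ) := by
  have hβ' : (0:ℝ) < 1/β := by positivity
  have hτ0 : (0:ℝ) < τ := lt_trans hβ' hτ
  have hx : 1 < β * τ := by
    rw [Set.mem_Ioi, div_lt_iff₀ hβ] at hτ
    nlinarith
  set a : ℝ := Real.exp (-β*τ) * (4 * Real.pi) / τ with ha
  have ha0 : 0 ≤ a := by positivity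
  have hfin : IntegrableOn (fun u => β ^ u * τ ^ (u-1) / Real.Gamma u) (Ioi 0) volume :=
    integ' β τ hβ hx hτ0
  have hnn : 0 ≤ᵐ[volume.restrict (Ioi (0:ℝ))] (fun u => β ^ u * τ ^ (u-1) / Real.Gamma u) := by
    filter_upwards [self_mem_ae_restrict (measurableSet_Ioi : MeasurableSet (Ioi (0:ℝ)))] with u hu
    have := Real.Gamma_pos_of_pos (mem_Ioi.mp hu)
    positivity
  have e1 : Real.exp (-β * τ) * sBeta β τ / τ
      = a * ∫ u in Ioi (0:ℝ), β ^ u * τ ^ (u-1) / Real.Gamma u := by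
    rw [sBeta, ha]; ring
  rw [e1, ENNReal.ofReal_mul ha0, ofReal_integral_eq_lintegral_ofReal hfin hnn,
    ← lintegral_const_mul' _ _ ENNReal.ofReal_ne_top]
  refine setLIntegral_congr_fun measurableSet_Ioi ?_
  intro u hu
  beta_reduce
  rw [← ENNReal.ofReal_mul ha0]
  congr 1
  rw [ha]; field_simp

private theorem div_top (β : ℝ) (hβ : 0 < β) :
    ∫⁻ u in Ioi (4:ℝ), ENNReal.ofReal (β * u⁻¹) = ⊤ := by
  by_contra h
  have hmeas : Measurable fun u : ℝ => β * u⁻¹ := measurable_const.mul measurable_inv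
  have hInt : IntegrableOn (fun u : ℝ => β * u⁻¹) (Ioi 4) volume := by
    refine ⟨hmeas.aestronglyMeasurable, ?_⟩
    rw [hasFiniteIntegral_iff_norm]
    have : ∀ᵐ u ∂(volume.restrict (Ioi (4:ℝ))),
        ENNReal.ofReal ‖β * u⁻¹‖ = ENNReal.ofReal (β * u⁻¹) := by
      filter_upwards [self_mem_ae_restrict (measurableSet_Ioi : MeasurableSet (Ioi (4:ℝ)))] with u hu
      have hu0 : (0:ℝ) < u := by linarith [mem_Ioi.mp hu]
      rw [Real.norm_eq_abs, abs_of_nonneg (by positivity)]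
    rw [lintegral_congr_ae this]
    exact lt_top_iff_ne_top.mpr h
  have hInt2 : IntegrableOn (fun u : ℝ => u ^ (-1:ℝ)) (Ioi 4) volume := by
    have h2 : IntegrableOn (fun u : ℝ => β⁻¹ * (β * u⁻¹)) (Ioi 4) volume := hInt.const_mul β⁻¹
    refine h2.congr_fun (fun u hu => ?_) measurableSet_Ioi
    have hu0 : (0:ℝ) < u := by linarith [mem_Ioi.mp hu]
    beta_reduce
    rw [← mul_assoc, inv_mul_cancel₀ hβ.ne', one_mul, Real.rpow_neg_one]
  rw [integrableOn_Ioi_rpow_iff (by norm_num : (0:ℝ) < 4)] at hInt2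
  linarith

private theorem measF (β : ℝ) (hβ : 0 < β) :
    AEMeasurable (fun p : ℝ × ℝ =>
      ENNReal.ofReal (Real.exp (-β*p.1) * (4 * Real.pi * (β^p.2 * p.1^(p.2-1) / Real.Gamma p.2)) / p.1))
      ((volume.restrict (Ioi (1/β))).prod (volume.restrict (Ioi (0:ℝ)))) := by
  have m1 : Measurable fun p : ℝ × ℝ => Real.exp (-β*p.1) :=
    (measurable_fst.const_mul (-β)).exp
  have m2 : Measurable fun p : ℝ × ℝ => β ^ p.2 :=
    measurable_const.pow measurable_snd
  have m3 : Measurable fun p : ℝ × ℝ => p.1 ^ (p.2 - 1) :=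
    measurable_fst.pow (measurable_snd.sub measurable_const)
  have m4 : AEMeasurable (fun p : ℝ × ℝ => Real.Gamma p.2)
      ((volume.restrict (Ioi (1/β))).prod (volume.restrict (Ioi (0:ℝ)))) :=
    AEMeasurable.comp_snd ((contOn _ subset_rfl).aemeasurable measurableSet_Ioi)
  exact ((m1.aemeasurable.mul (((m2.mul m3).aemeasurable.div m4).const_mul
    (4 * Real.pi))).div measurable_fst.aemeasurable).ennreal_ofReal

end Aux

/-- `∫_{1/β}^∞ e^{-βτ} 𝔰^β(τ) τ⁻¹ dτ = ∞`. -/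
theorem stmt17 (β : ℝ) (hβ : 0 < β) :
    ∫⁻ τ in Set.Ioi (1 / β),
      ENNReal.ofReal (Real.exp (-β * τ) * sBeta β τ / τ) = ⊤ := by
  rw [eq_top_iff]
  have hswap := lintegral_lintegral_swap (μ := volume.restrict (Ioi (1/β)))
    (ν := volume.restrict (Ioi (0:ℝ)))
    (f := fun τ u => ENNReal.ofReal
      (Real.exp (-β*τ) * (4 * Real.pi * (β^u * τ^(u-1) / Real.Gamma u)) / τ))
    (measF β hβ)
  calc (⊤ : ℝ≥0∞)
      = ∫⁻ u in Ioi (4:ℝ), ENNReal.ofReal (β * u⁻¹) := (div_top β hβ).symm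
    _ ≤ ∫⁻ u in Ioi (4:ℝ), ∫⁻ τ in Ioi (1/β),
          ENNReal.ofReal (Real.exp (-β*τ) * (4 * Real.pi * (β^u * τ^(u-1) / Real.Gamma u)) / τ) := by
        refine lintegral_mono_ae ?_
        filter_upwards [self_mem_ae_restrict (measurableSet_Ioi : MeasurableSet (Ioi (4:ℝ)))] with u hu
        exact tau_lower β hβ u (mem_Ioi.mp hu)
    _ ≤ ∫⁻ u in Ioi (0:ℝ), ∫⁻ τ in Ioi (1/β),
          ENNReal.ofReal (Real.exp (-β*τ) * (4 * Real.pi * (β^u * τ^(u-1) / Real.Gamma u)) / τ) :=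
        lintegral_mono_set (fun u hu => mem_Ioi.mpr (lt_trans (by norm_num) (mem_Ioi.mp hu)))
    _ = ∫⁻ τ in Ioi (1/β), ∫⁻ u in Ioi (0:ℝ),
          ENNReal.ofReal (Real.exp (-β*τ) * (4 * Real.pi * (β^u * τ^(u-1) / Real.Gamma u)) / τ) :=
        hswap.symm
    _ = ∫⁻ τ in Set.Ioi (1 / β), ENNReal.ofReal (Real.exp (-β * τ) * sBeta β τ / τ) := by
        refine setLIntegral_congr_fun measurableSet_Ioi ?_
        intro τ hτ
        exact (L4 β τ hβ hτ).symm
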